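/- Let 0 < β ≤ 3 and ν > 0. For every initial condition (x_n)_{n≥1} with x_n ≥ 0 for all n ≥ 1 and Σ_{n=1}^∞ x_n² < ∞, the viscous dyadic model has at most one weak solution on [0,T] with initial condition (x_n)_{n≥1}, for every T > 0 (i.e. any two weak solutions with this initial condition coincide on [0,T]). -/

import Mathlib

/-- The dyadic frequencies: `λ_0 = 0`, `λ_n = 2^n` for `n ≥ 1`. -/
noncomputable def lam (n : ℕ) : ℝ := if n = 0 then 0 else 2 ^ n

/-- `X` is a weak solution of the viscous dyadic model with parameter `β` and
viscosity `ν` on the interval `I`. -/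
def IsViscousSolution (β ν : ℝ) (I : Set ℝ) (X : ℕ → ℝ → ℝ) : Prop :=
  ∀ n, 1 ≤ n → ∀ t ∈ I, HasDerivWithinAt (X n)
    (-ν * lam n ^ 2 * X n t + lam (n - 1) ^ β * (X (n - 1) t) ^ 2
      - lam n ^ β * X n t * X (n + 1) t) I t

open Set MeasureTheory intervalIntegral Finset Filter Topology

lemma lam_nonneg (n : ℕ) : 0 ≤ lam n := by
  unfold lam; split <;> positivity

lemma lam_zero : lam 0 = 0 := by simp [lam]

lemma lam_one_le {n : ℕ} (hn : 1 ≤ n) : 1 ≤ lam n := by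
  unfold lam; rw [if_neg (by omega)]
  exact one_le_pow₀ (by norm_num)

lemma lam_zero_rpow {β : ℝ} (hβ : 0 < β) : lam 0 ^ β = 0 := by
  rw [lam_zero, Real.zero_rpow hβ.ne']

lemma lam_rpow_nonneg (n : ℕ) (β : ℝ) : 0 ≤ lam n ^ β :=
  Real.rpow_nonneg (lam_nonneg n) β

lemma sol_contOn {β ν T : ℝ} {X : ℕ → ℝ → ℝ} (hX : IsViscousSolution β ν (Set.Icc 0 T) X)
    {n : ℕ} (hn : 1 ≤ n) : ContinuousOn (X n) (Set.Icc 0 T) :=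
  fun t ht => (hX n hn t ht).continuousWithinAt

lemma contOn_integrable {f : ℝ → ℝ} {T u : ℝ} (hf : ContinuousOn f (Icc 0 T))
    (hu : u ∈ Icc (0:ℝ) T) : IntervalIntegrable f volume 0 u := by
  apply ContinuousOn.intervalIntegrable
  rw [Set.uIcc_of_le hu.1]
  exact hf.mono (Icc_subset_Icc le_rfl hu.2)

lemma sol_nonneg {β ν T : ℝ} {x : ℕ → ℝ} {X : ℕ → ℝ → ℝ}
    (hβ0 : 0 < β) (hT : 0 < T)
    (hX : IsViscousSolution β ν (Set.Icc 0 T) X)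
    (hX0 : ∀ n, 1 ≤ n → X n 0 = x n) (hxpos : ∀ n, 1 ≤ n → 0 ≤ x n) :
    ∀ n, 1 ≤ n → ∀ t ∈ Set.Icc (0:ℝ) T, 0 ≤ X n t := by
  intro n hn t ht
  have h0I : (0:ℝ) ∈ Icc (0:ℝ) T := ⟨le_rfl, hT.le⟩
  set a : ℝ → ℝ := fun s => -ν * lam n ^ 2 - lam n ^ β * X (n+1) s with ha
  have haCont : ContinuousOn a (Icc 0 T) :=
    continuousOn_const.sub (continuousOn_const.mul (sol_contOn hX (Nat.le_add_left 1 n)))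
  set A : ℝ → ℝ := fun u => ∫ s in (0:ℝ)..u, a s with hA
  have hAd : ∀ u ∈ Icc (0:ℝ) T, HasDerivWithinAt A (a u) (Icc 0 T) u := by
    intro u hu
    haveI : Fact (u ∈ Icc (0:ℝ) T) := ⟨hu⟩
    exact intervalIntegral.integral_hasDerivWithinAt_right (contOn_integrable haCont hu)
      (haCont.stronglyMeasurableAtFilter_nhdsWithin measurableSet_Icc u)
      (haCont u hu)
  set h : ℝ → ℝ := fun u => X n u * Real.exp (-A u) with hh
  have hhd : ∀ u ∈ Icc (0:ℝ) T, HasDerivWithinAt h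
      (Real.exp (-A u) * (lam (n-1) ^ β * X (n-1) u ^ 2)) (Icc 0 T) u := by
    intro u hu
    have hd := (hX n hn u hu).mul ((hAd u hu).neg.exp)
    refine HasDerivWithinAt.congr_deriv hd ?_
    show _ * Real.exp (-A u) + X n u * (Real.exp (-A u) * -(-ν * lam n ^ 2 - lam n ^ β * X (n+1) u)) = _
    ring
  have hmono : MonotoneOn h (Icc 0 T) := by
    apply monotoneOn_of_deriv_nonneg (convex_Icc 0 T)
      (fun u hu => (hhd u hu).continuousWithinAt)
    · intro u hu
      rw [interior_Icc] at hu
      exact (((hhd u (Ioo_subset_Icc_self hu)).hasDerivAt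
        (Icc_mem_nhds hu.1 hu.2)).differentiableAt).differentiableWithinAt
    · intro u hu
      rw [interior_Icc] at hu
      rw [((hhd u (Ioo_subset_Icc_self hu)).hasDerivAt (Icc_mem_nhds hu.1 hu.2)).deriv]
      have := lam_rpow_nonneg (n-1) β
      positivity
  have h0 : h 0 = x n := by
    simp only [hh, hA, intervalIntegral.integral_same, neg_zero, Real.exp_zero, mul_one]
    exact hX0 n hn
  have hle : h 0 ≤ h t := hmono h0I ht ht.1
  rw [h0] at hle
  have hxn := hxpos n hn
  have hepos := Real.exp_pos (-A t)
  simp only [hh] at hle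
  nlinarith [hle, hepos, hxn]

lemma q_contOn {β ν T : ℝ} {X : ℕ → ℝ → ℝ} (hβ0 : 0 < β)
    (hX : IsViscousSolution β ν (Set.Icc 0 T) X) (m : ℕ) :
    ContinuousOn (fun s => lam m ^ β * X m s ^ 2 * X (m+1) s) (Icc 0 T) := by
  cases m with
  | zero =>
      have : (fun s => lam 0 ^ β * X 0 s ^ 2 * X 1 s) = fun _ => (0:ℝ) := by
        funext s; rw [lam_zero_rpow hβ0]; ring
      rw [this]; exact continuousOn_const
  | succ k =>
      exact (continuousOn_const.mul ((sol_contOn hX (Nat.le_add_left 1 k)).pow 2)).mul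
        (sol_contOn hX (Nat.le_add_left 1 (k+1)))

lemma sol_energy {β ν T : ℝ} {x : ℕ → ℝ} {X : ℕ → ℝ → ℝ}
    (hβ0 : 0 < β) (hT : 0 < T)
    (hX : IsViscousSolution β ν (Set.Icc 0 T) X)
    (hX0 : ∀ n, 1 ≤ n → X n 0 = x n) (hxpos : ∀ n, 1 ≤ n → 0 ≤ x n) :
    ∀ N, ∀ t ∈ Set.Icc (0:ℝ) T,
      (∑ i ∈ Finset.range N, X (i+1) t ^ 2)
        + 2*ν*(∫ s in (0:ℝ)..t, ∑ i ∈ Finset.range N, lam (i+1)^2 * X (i+1) s ^ 2)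
      ≤ ∑ i ∈ Finset.range N, x (i+1) ^ 2 := by
  intro N t ht
  have hpos := sol_nonneg hβ0 hT hX hX0 hxpos
  set u : ℝ → ℝ := fun s => ∑ i ∈ Finset.range N, X (i+1) s ^ 2 with hu
  set v : ℝ → ℝ := fun s => ∑ i ∈ Finset.range N, lam (i+1)^2 * X (i+1) s ^ 2 with hv
  set q : ℕ → ℝ → ℝ := fun m s => lam m ^ β * X m s ^ 2 * X (m+1) s with hq
  set U : ℝ → ℝ := fun s => -(2*ν) * v s - 2 * q N s with hU
  have hud : ∀ s ∈ Icc (0:ℝ) T, HasDerivWithinAt u (U s) (Icc 0 T) s := by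
    intro s hs
    have hsum : HasDerivWithinAt u
        (∑ i ∈ Finset.range N, ((2:ℕ) * X (i+1) s ^ (2-1) *
          (-ν * lam (i+1) ^ 2 * X (i+1) s + lam (i+1-1) ^ β * (X (i+1-1) s) ^ 2
            - lam (i+1) ^ β * X (i+1) s * X (i+1+1) s))) (Icc 0 T) s :=
      HasDerivWithinAt.fun_sum fun i _ =>
        (hX (i+1) (Nat.le_add_left 1 i) s hs).pow 2
    convert hsum using 1
    have hterm : ∀ i ∈ Finset.range N, ((2:ℕ) * X (i+1) s ^ (2-1) *
          (-ν * lam (i+1) ^ 2 * X (i+1) s + lam (i+1-1) ^ β * (X (i+1-1) s) ^ 2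
            - lam (i+1) ^ β * X (i+1) s * X (i+1+1) s))
        = -(2*ν) * (lam (i+1)^2 * X (i+1) s ^ 2) + 2 * (q i s - q (i+1) s) := by
      intro i _
      simp only [hq, Nat.add_sub_cancel]
      push_cast
      ring
    rw [Finset.sum_congr rfl hterm, Finset.sum_add_distrib, ← Finset.mul_sum,
      ← Finset.mul_sum, Finset.sum_range_sub' (fun i => q i s) N]
    have hq0 : q 0 s = 0 := by simp only [hq]; rw [lam_zero_rpow hβ0]; ring
    rw [hq0]
    simp only [hU, hv]
    ring
  have hucont : ContinuousOn u (Icc 0 T) := fun s hs => (hud s hs).continuousWithinAt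
  have hvcont : ContinuousOn v (Icc 0 T) :=
    continuousOn_finset_sum _ fun i _ =>
      continuousOn_const.mul ((sol_contOn hX (Nat.le_add_left 1 i)).pow 2)
  have hUcont : ContinuousOn U (Icc 0 T) :=
    (continuousOn_const.mul hvcont).sub (continuousOn_const.mul (q_contOn hβ0 hX N))
  have hftc : ∫ s in (0:ℝ)..t, U s = u t - u 0 := by
    apply intervalIntegral.integral_eq_sub_of_hasDeriv_right_of_le ht.1
      (hucont.mono (Icc_subset_Icc le_rfl ht.2))
    · intro s hs
      have hsI : s ∈ Icc (0:ℝ) T := ⟨hs.1.le, hs.2.le.trans ht.2⟩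
      exact (hud s hsI).mono_of_mem_nhdsWithin
        (Icc_mem_nhdsGT_of_mem ⟨hs.1.le, hs.2.trans_le ht.2⟩)
    · exact contOn_integrable hUcont ht
  have hmono : ∫ s in (0:ℝ)..t, U s ≤ ∫ s in (0:ℝ)..t, -(2*ν) * v s := by
    apply intervalIntegral.integral_mono_on ht.1 (contOn_integrable hUcont ht)
      (contOn_integrable (continuousOn_const.mul hvcont) ht)
    intro s hs
    have hsI : s ∈ Icc (0:ℝ) T := ⟨hs.1, hs.2.trans ht.2⟩
    have hqN : 0 ≤ q N s := by
      cases N with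
      | zero => simp only [hq]; rw [lam_zero_rpow hβ0]; simp
      | succ k =>
          exact mul_nonneg (mul_nonneg (lam_rpow_nonneg _ _) (sq_nonneg _))
            (hpos (k+2) (by omega) s hsI)
    simp only [hU, Pi.mul_apply]
    linarith
  rw [hftc] at hmono
  rw [intervalIntegral.integral_const_mul] at hmono
  have hu0 : u 0 = ∑ i ∈ Finset.range N, x (i+1) ^ 2 := by
    simp only [hu]
    exact Finset.sum_congr rfl fun i _ => by rw [hX0 (i+1) (Nat.le_add_left 1 i)]
  rw [hu0] at hmono
  simp only [hu, hv] at hmono ⊢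
  linarith

lemma sol_sq_le {β ν T : ℝ} {x : ℕ → ℝ} {X : ℕ → ℝ → ℝ}
    (hβ0 : 0 < β) (hν : 0 < ν) (hT : 0 < T)
    (hX : IsViscousSolution β ν (Set.Icc 0 T) X)
    (hX0 : ∀ n, 1 ≤ n → X n 0 = x n) (hxpos : ∀ n, 1 ≤ n → 0 ≤ x n)
    (hxH : Summable fun i => x (i + 1) ^ 2) :
    ∀ n, 1 ≤ n → ∀ t ∈ Set.Icc (0:ℝ) T, X n t ^ 2 ≤ ∑' i, x (i+1) ^ 2 := by
  intro n hn t ht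
  obtain ⟨k, rfl⟩ : ∃ k, n = k + 1 := ⟨n - 1, by omega⟩
  have hE := sol_energy hβ0 hT hX hX0 hxpos (k+1) t ht
  have h1 : X (k+1) t ^ 2 ≤ ∑ i ∈ Finset.range (k+1), X (i+1) t ^ 2 :=
    Finset.single_le_sum (fun i _ => sq_nonneg (X (i+1) t)) (Finset.self_mem_range_succ k)
  have h2 : 0 ≤ ∫ s in (0:ℝ)..t, ∑ i ∈ Finset.range (k+1), lam (i+1)^2 * X (i+1) s ^ 2 := by
    apply intervalIntegral.integral_nonneg ht.1
    intro s _
    exact Finset.sum_nonneg fun i _ => mul_nonneg (sq_nonneg _) (sq_nonneg _)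
  have h3 : ∑ i ∈ Finset.range (k+1), x (i+1) ^ 2 ≤ ∑' i, x (i+1) ^ 2 :=
    Summable.sum_le_tsum _ (fun i _ => sq_nonneg _) hxH
  nlinarith [h1, h2, h3, hE]

lemma integral_le_full {T t : ℝ} {f : ℝ → ℝ} (hf : ContinuousOn f (Icc 0 T))
    (hnn : ∀ s ∈ Icc (0:ℝ) T, 0 ≤ f s) (ht : t ∈ Icc (0:ℝ) T) :
    ∫ s in (0:ℝ)..t, f s ≤ ∫ s in (0:ℝ)..T, f s := by
  have h1 : IntervalIntegrable f volume 0 t := contOn_integrable hf ht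
  have h2 : IntervalIntegrable f volume t T := by
    apply ContinuousOn.intervalIntegrable
    rw [Set.uIcc_of_le ht.2]
    exact hf.mono (Icc_subset_Icc ht.1 le_rfl)
  have h3 : 0 ≤ ∫ s in t..T, f s :=
    intervalIntegral.integral_nonneg ht.2 fun u hu => hnn u ⟨ht.1.trans hu.1, hu.2⟩
  have h4 := intervalIntegral.integral_add_adjacent_intervals h1 h2
  linarith

lemma key_bound {β ν T : ℝ} {x : ℕ → ℝ} {X Y : ℕ → ℝ → ℝ}
    (hβ0 : 0 < β) (hβ3 : β ≤ 3) (hν : 0 < ν) (hT : 0 < T)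
    (hxpos : ∀ n, 1 ≤ n → 0 ≤ x n) (hxH : Summable fun n => x (n + 1) ^ 2)
    (hX : IsViscousSolution β ν (Set.Icc 0 T) X) (hX0 : ∀ n, 1 ≤ n → X n 0 = x n)
    (hY : IsViscousSolution β ν (Set.Icc 0 T) Y) (hY0 : ∀ n, 1 ≤ n → Y n 0 = x n)
    {n : ℕ} (hn : 1 ≤ n) {t : ℝ} (ht : t ∈ Set.Icc (0:ℝ) T)
    (j : ℕ) (hnj : n ≤ j + 1) :
    (1/2:ℝ)^n * (X n t - Y n t)^2 ≤ 4 * Real.sqrt (∑' i, x (i+1)^2) *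
      ((∫ s in (0:ℝ)..T, lam (j+1)^2 * X (j+1) s^2)
        + (∫ s in (0:ℝ)..T, lam (j+1)^2 * Y (j+1) s^2)) := by
  -- basic facts
  have hXpos := sol_nonneg hβ0 hT hX hX0 hxpos
  have hYpos := sol_nonneg hβ0 hT hY hY0 hxpos
  set E2 : ℝ := ∑' i, x (i+1)^2 with hE2def
  have hE2 : 0 ≤ E2 := tsum_nonneg fun i => sq_nonneg _
  set E : ℝ := Real.sqrt E2 with hEdef
  have hE : 0 ≤ E := Real.sqrt_nonneg _
  have hEsq : E^2 = E2 := Real.sq_sqrt hE2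
  have hXle : ∀ m, 1 ≤ m → ∀ s ∈ Icc (0:ℝ) T, X m s ≤ E := by
    intro m hm s hs
    have h1 := sol_sq_le hβ0 hν hT hX hX0 hxpos hxH m hm s hs
    have h2 := hXpos m hm s hs
    nlinarith [h1, h2, hE, hEsq]
  have hYle : ∀ m, 1 ≤ m → ∀ s ∈ Icc (0:ℝ) T, Y m s ≤ E := by
    intro m hm s hs
    have h1 := sol_sq_le hβ0 hν hT hY hY0 hxpos hxH m hm s hs
    have h2 := hYpos m hm s hs
    nlinarith [h1, h2, hE, hEsq]
  set N : ℕ := j + 1 with hNdef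
  set w : ℕ → ℝ := fun m => (1/2:ℝ)^m with hwdef
  have hwnn : ∀ m, 0 ≤ w m := fun m => by positivity
  set F : ℝ → ℝ := fun s => ∑ i ∈ Finset.range N, w (i+1) * (X (i+1) s - Y (i+1) s)^2
    with hFdef
  set ψ : ℕ → ℝ → ℝ := fun m s => w m * lam m ^ β *
      ((X m s + Y m s) * ((X m s - Y m s) * (X (m+1) s - Y (m+1) s))) with hψdef
  set C : ℝ → ℝ := fun s =>
      (∑ i ∈ Finset.range N,
        (-(2*ν) * (w (i+1) * (lam (i+1)^2 * (X (i+1) s - Y (i+1) s)^2))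
          - w (i+1) * lam (i+1)^β * ((X (i+1+1) s + Y (i+1+1) s)
              * (X (i+1) s - Y (i+1) s)^2)))
      - ψ N s with hCdef
  -- derivative of F
  have hFd : ∀ s ∈ Icc (0:ℝ) T, HasDerivWithinAt F (C s) (Icc 0 T) s := by
    intro s hs
    have hsum : HasDerivWithinAt F
        (∑ i ∈ Finset.range N, (w (i+1) * ((2:ℕ) * (X (i+1) s - Y (i+1) s) ^ (2-1) *
          ((-ν * lam (i+1) ^ 2 * X (i+1) s + lam (i+1-1) ^ β * (X (i+1-1) s) ^ 2
              - lam (i+1) ^ β * X (i+1) s * X (i+1+1) s)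
            - (-ν * lam (i+1) ^ 2 * Y (i+1) s + lam (i+1-1) ^ β * (Y (i+1-1) s) ^ 2
              - lam (i+1) ^ β * Y (i+1) s * Y (i+1+1) s))))) (Icc 0 T) s :=
      HasDerivWithinAt.fun_sum fun i _ =>
        HasDerivWithinAt.const_mul (w (i+1))
          (((hX (i+1) (Nat.le_add_left 1 i) s hs).sub
            (hY (i+1) (Nat.le_add_left 1 i) s hs)).pow 2)
    convert hsum using 1
    have hterm : ∀ i ∈ Finset.range N,
        (w (i+1) * ((2:ℕ) * (X (i+1) s - Y (i+1) s) ^ (2-1) *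
          ((-ν * lam (i+1) ^ 2 * X (i+1) s + lam (i+1-1) ^ β * (X (i+1-1) s) ^ 2
              - lam (i+1) ^ β * X (i+1) s * X (i+1+1) s)
            - (-ν * lam (i+1) ^ 2 * Y (i+1) s + lam (i+1-1) ^ β * (Y (i+1-1) s) ^ 2
              - lam (i+1) ^ β * Y (i+1) s * Y (i+1+1) s))))
        = (-(2*ν) * (w (i+1) * (lam (i+1)^2 * (X (i+1) s - Y (i+1) s)^2))
          - w (i+1) * lam (i+1)^β * ((X (i+1+1) s + Y (i+1+1) s)
              * (X (i+1) s - Y (i+1) s)^2))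
          + (ψ i s - ψ (i+1) s) := by
      intro i _
      simp only [hψdef, hwdef, Nat.add_sub_cancel]
      push_cast
      ring
    rw [Finset.sum_congr rfl hterm, Finset.sum_add_distrib,
      Finset.sum_range_sub' (fun i => ψ i s) N]
    have hψ0 : ψ 0 s = 0 := by
      simp only [hψdef]; rw [lam_zero_rpow hβ0]; ring
    rw [hψ0]
    simp only [hCdef]
    ring
  have hFcont : ContinuousOn F (Icc 0 T) := fun s hs => (hFd s hs).continuousWithinAt
  -- continuity of C
  have hψNcont : ContinuousOn (ψ N) (Icc 0 T) := by
    simp only [hψdef]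
    exact continuousOn_const.mul
      (((sol_contOn hX (by omega)).add (sol_contOn hY (by omega))).mul
        (((sol_contOn hX (by omega)).sub (sol_contOn hY (by omega))).mul
          ((sol_contOn hX (by omega)).sub (sol_contOn hY (by omega)))))
  have hCcont : ContinuousOn C (Icc 0 T) := by
    apply ContinuousOn.sub _ hψNcont
    apply continuousOn_finset_sum
    intro i _
    apply ContinuousOn.sub
    · exact continuousOn_const.mul (continuousOn_const.mul (continuousOn_const.mul
        (((sol_contOn hX (Nat.le_add_left 1 i)).sub
          (sol_contOn hY (Nat.le_add_left 1 i))).pow 2)))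
    · exact continuousOn_const.mul
        (((sol_contOn hX (Nat.le_add_left 1 (i+1))).add
            (sol_contOn hY (Nat.le_add_left 1 (i+1)))).mul
          (((sol_contOn hX (Nat.le_add_left 1 i)).sub
            (sol_contOn hY (Nat.le_add_left 1 i))).pow 2))
  -- initial value
  have hF0 : F 0 = 0 := by
    simp only [hFdef]
    apply Finset.sum_eq_zero
    intro i _
    rw [hX0 (i+1) (Nat.le_add_left 1 i), hY0 (i+1) (Nat.le_add_left 1 i)]
    ring
  -- FTC
  have hftc : ∫ s in (0:ℝ)..t, C s = F t - F 0 := by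
    apply intervalIntegral.integral_eq_sub_of_hasDeriv_right_of_le ht.1
      (hFcont.mono (Icc_subset_Icc le_rfl ht.2))
    · intro s hs
      exact (hFd s ⟨hs.1.le, hs.2.le.trans ht.2⟩).mono_of_mem_nhdsWithin
        (Icc_mem_nhdsGT_of_mem ⟨hs.1.le, hs.2.trans_le ht.2⟩)
    · exact contOn_integrable hCcont ht
  -- upper bound for C
  set B : ℝ → ℝ := fun s => (4*E*(w N * lam N ^ β)) * (X N s^2 + Y N s^2) with hBdef
  have hc0 : 0 ≤ w N * lam N ^ β := mul_nonneg (hwnn N) (lam_rpow_nonneg _ _)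
  have hCB : ∀ s ∈ Icc (0:ℝ) T, C s ≤ B s := by
    intro s hs
    have hsum_nonpos : (∑ i ∈ Finset.range N,
        (-(2*ν) * (w (i+1) * (lam (i+1)^2 * (X (i+1) s - Y (i+1) s)^2))
          - w (i+1) * lam (i+1)^β * ((X (i+1+1) s + Y (i+1+1) s)
              * (X (i+1) s - Y (i+1) s)^2))) ≤ 0 := by
      apply Finset.sum_nonpos
      intro i _
      have h1 : 0 ≤ w (i+1) * (lam (i+1)^2 * (X (i+1) s - Y (i+1) s)^2) := by
        have := hwnn (i+1); positivity
      have h2 : 0 ≤ X (i+1+1) s + Y (i+1+1) s :=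
        add_nonneg (hXpos (i+1+1) (by omega) s hs) (hYpos (i+1+1) (by omega) s hs)
      have h3 : 0 ≤ w (i+1) * lam (i+1)^β * ((X (i+1+1) s + Y (i+1+1) s)
              * (X (i+1) s - Y (i+1) s)^2) :=
        mul_nonneg (mul_nonneg (hwnn _) (lam_rpow_nonneg _ _))
          (mul_nonneg h2 (sq_nonneg _))
      nlinarith [h1, h3, hν]
    have hXN := hXpos N (by omega) s hs
    have hYN := hYpos N (by omega) s hs
    have hXN1 := hXpos (N+1) (by omega) s hs
    have hYN1 := hYpos (N+1) (by omega) s hs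
    have hXN1e := hXle (N+1) (by omega) s hs
    have hYN1e := hYle (N+1) (by omega) s hs
    have hSnn : 0 ≤ X N s + Y N s := by linarith
    have habs1 : |X N s - Y N s| ≤ X N s + Y N s := abs_le.2 ⟨by linarith, by linarith⟩
    have habs2 : |X (N+1) s - Y (N+1) s| ≤ 2*E := abs_le.2 ⟨by linarith, by linarith⟩
    have hprod : -((X N s - Y N s) * (X (N+1) s - Y (N+1) s))
        ≤ (X N s + Y N s) * (2*E) := by
      calc -((X N s - Y N s) * (X (N+1) s - Y (N+1) s))
          ≤ |(X N s - Y N s) * (X (N+1) s - Y (N+1) s)| := neg_le_abs _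
        _ = |X N s - Y N s| * |X (N+1) s - Y (N+1) s| := abs_mul _ _
        _ ≤ (X N s + Y N s) * (2*E) :=
            mul_le_mul habs1 habs2 (abs_nonneg _) (by linarith)
    have hψb1 : -ψ N s ≤ (w N * lam N ^ β) *
        ((X N s + Y N s) * ((X N s + Y N s) * (2*E))) := by
      have hstep := mul_le_mul_of_nonneg_left
        (mul_le_mul_of_nonneg_left hprod hSnn) hc0
      simp only [hψdef]
      calc -(w N * lam N ^ β *
            ((X N s + Y N s) * ((X N s - Y N s) * (X (N+1) s - Y (N+1) s))))
          = (w N * lam N ^ β) * ((X N s + Y N s) *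
              (-((X N s - Y N s) * (X (N+1) s - Y (N+1) s)))) := by ring
        _ ≤ (w N * lam N ^ β) * ((X N s + Y N s) * ((X N s + Y N s) * (2*E))) := hstep
    have hsq2 : (X N s + Y N s)^2 ≤ 2*(X N s^2 + Y N s^2) := by nlinarith [sq_nonneg (X N s - Y N s)]
    have hψb2 : (w N * lam N ^ β) * ((X N s + Y N s) * ((X N s + Y N s) * (2*E))) ≤ B s := by
      have h4 : 0 ≤ 2*E*(w N * lam N ^ β) := by positivity
      have h5 := mul_le_mul_of_nonneg_left hsq2 h4
      simp only [hBdef]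
      calc (w N * lam N ^ β) * ((X N s + Y N s) * ((X N s + Y N s) * (2*E)))
          = 2*E*(w N * lam N ^ β) * (X N s + Y N s)^2 := by ring
        _ ≤ 2*E*(w N * lam N ^ β) * (2*(X N s^2 + Y N s^2)) := h5
        _ = 4*E*(w N * lam N ^ β) * (X N s^2 + Y N s^2) := by ring
    simp only [hCdef]
    linarith [hsum_nonpos, hψb1, hψb2]
  -- integrate the bound
  have hBcont : ContinuousOn B (Icc 0 T) := by
    simp only [hBdef]
    exact continuousOn_const.mul
      (((sol_contOn hX (by omega)).pow 2).add ((sol_contOn hY (by omega)).pow 2))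
  have hFt : F t ≤ ∫ s in (0:ℝ)..t, B s := by
    have h1 : ∫ s in (0:ℝ)..t, C s ≤ ∫ s in (0:ℝ)..t, B s := by
      apply intervalIntegral.integral_mono_on ht.1 (contOn_integrable hCcont ht)
        (contOn_integrable hBcont ht)
      exact fun s hs => hCB s ⟨hs.1, hs.2.trans ht.2⟩
    rw [hftc, hF0] at h1
    linarith
  have hBeq : ∫ s in (0:ℝ)..t, B s
      = (4*E*(w N * lam N ^ β)) * ∫ s in (0:ℝ)..t, (X N s^2 + Y N s^2) := by
    simp only [hBdef]
    exact intervalIntegral.integral_const_mul _ _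
  have hXcont := sol_contOn hX (show 1 ≤ N by omega)
  have hYcont := sol_contOn hY (show 1 ≤ N by omega)
  have hIcont : ContinuousOn (fun s => lam N^2 * (X N s^2 + Y N s^2)) (Icc 0 T) :=
    continuousOn_const.mul ((hXcont.pow 2).add (hYcont.pow 2))
  have hDb : lam N ^2 * ∫ s in (0:ℝ)..t, (X N s^2 + Y N s^2)
      ≤ (∫ s in (0:ℝ)..T, lam N^2 * X N s^2)
        + (∫ s in (0:ℝ)..T, lam N^2 * Y N s^2) := by
    rw [← intervalIntegral.integral_const_mul]
    have step1 : ∫ s in (0:ℝ)..t, lam N^2 * (X N s^2 + Y N s^2)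
        ≤ ∫ s in (0:ℝ)..T, lam N^2 * (X N s^2 + Y N s^2) :=
      integral_le_full hIcont (fun s _ => by positivity) ht
    have step2 : ∫ s in (0:ℝ)..T, lam N^2 * (X N s^2 + Y N s^2)
        = (∫ s in (0:ℝ)..T, lam N^2 * X N s^2)
          + (∫ s in (0:ℝ)..T, lam N^2 * Y N s^2) := by
      rw [← intervalIntegral.integral_add
        (contOn_integrable (f := fun s => lam N^2 * X N s^2) (continuousOn_const.mul (hXcont.pow 2)) ⟨hT.le, le_rfl⟩)
        (contOn_integrable (f := fun s => lam N^2 * Y N s^2) (continuousOn_const.mul (hYcont.pow 2)) ⟨hT.le, le_rfl⟩)]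
      apply intervalIntegral.integral_congr
      intro s _
      ring
    linarith
  have hIt : 0 ≤ ∫ s in (0:ℝ)..t, (X N s^2 + Y N s^2) :=
    intervalIntegral.integral_nonneg ht.1 fun s _ => by positivity
  -- the weight estimate
  have hwlam : w N * lam N ^ β ≤ lam N ^ 2 := by
    have hN1 : 1 ≤ lam N := lam_one_le (by omega)
    have h2 : lam N ^ β ≤ lam N ^ (3:ℝ) := Real.rpow_le_rpow_of_exponent_le hN1 hβ3
    have h3 : lam N ^ (3:ℝ) = lam N ^ (3:ℕ) := by
      rw [← Real.rpow_natCast (lam N) 3]; norm_num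
    have hwN : w N * lam N = 1 := by
      simp only [hwdef]
      unfold lam
      rw [if_neg (by omega : ¬ N = 0), div_pow, one_pow,
        div_mul_cancel₀ _ (pow_ne_zero N (two_ne_zero))]
    calc w N * lam N ^ β ≤ w N * lam N ^ (3:ℕ) := by
          rw [← h3]; exact mul_le_mul_of_nonneg_left h2 (hwnn N)
      _ = (w N * lam N) * lam N^2 := by ring
      _ = lam N ^ 2 := by rw [hwN, one_mul]
  -- the single term is dominated by F t
  have hterm : (1/2:ℝ)^n * (X n t - Y n t)^2 ≤ F t := by
    obtain ⟨k, rfl⟩ : ∃ k, n = k + 1 := ⟨n - 1, by omega⟩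
    have hkN : k ∈ Finset.range N := Finset.mem_range.2 (by omega)
    have hs := Finset.single_le_sum
      (f := fun i => w (i+1) * (X (i+1) t - Y (i+1) t)^2)
      (fun i _ => mul_nonneg (hwnn _) (sq_nonneg _)) hkN
    have h2 : w (k+1) * (X (k+1) t - Y (k+1) t)^2 ≤ F t := by
      simp only [hFdef]; exact hs
    simpa [hwdef] using h2
  -- chain everything
  calc (1/2:ℝ)^n * (X n t - Y n t)^2 ≤ F t := hterm
    _ ≤ (4*E*(w N * lam N ^ β)) * ∫ s in (0:ℝ)..t, (X N s^2 + Y N s^2) := by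
        rw [← hBeq]; exact hFt
    _ = (4*E) * ((w N * lam N ^ β) * ∫ s in (0:ℝ)..t, (X N s^2 + Y N s^2)) := by ring
    _ ≤ (4*E) * (lam N ^2 * ∫ s in (0:ℝ)..t, (X N s^2 + Y N s^2)) := by
        apply mul_le_mul_of_nonneg_left _ (by positivity)
        exact mul_le_mul_of_nonneg_right hwlam hIt
    _ ≤ (4*E) * ((∫ s in (0:ℝ)..T, lam N^2 * X N s^2)
          + (∫ s in (0:ℝ)..T, lam N^2 * Y N s^2)) :=
        mul_le_mul_of_nonneg_left hDb (by positivity)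
    _ = 4 * E * ((∫ s in (0:ℝ)..T, lam N^2 * X N s^2)
          + (∫ s in (0:ℝ)..T, lam N^2 * Y N s^2)) := by ring


/-- for `0 < β ≤ 3`, the viscous dyadic model has at most one weak
solution for every nonnegative square-summable initial condition. -/
theorem viscous_uniqueness_beta_le_three
    (β ν T : ℝ) (hβ0 : 0 < β) (hβ3 : β ≤ 3) (hν : 0 < ν) (hT : 0 < T)
    (x : ℕ → ℝ) (hxpos : ∀ n, 1 ≤ n → 0 ≤ x n)
    (hxH : Summable fun n => x (n + 1) ^ 2)
    (X Y : ℕ → ℝ → ℝ)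
    (hX : IsViscousSolution β ν (Set.Icc 0 T) X) (hX0 : ∀ n, 1 ≤ n → X n 0 = x n)
    (hY : IsViscousSolution β ν (Set.Icc 0 T) Y) (hY0 : ∀ n, 1 ≤ n → Y n 0 = x n) :
    ∀ n, 1 ≤ n → ∀ t ∈ Set.Icc (0 : ℝ) T, X n t = Y n t := by
  intro n hn t ht
  have hTI : T ∈ Icc (0:ℝ) T := ⟨hT.le, le_rfl⟩
  set DX : ℕ → ℝ := fun j => ∫ s in (0:ℝ)..T, lam (j+1)^2 * X (j+1) s^2 with hDXdef
  set DY : ℕ → ℝ := fun j => ∫ s in (0:ℝ)..T, lam (j+1)^2 * Y (j+1) s^2 with hDYdef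
  set D : ℕ → ℝ := fun j => DX j + DY j with hDdef
  have hDXnn : ∀ j, 0 ≤ DX j := fun j =>
    intervalIntegral.integral_nonneg hT.le fun s _ => by positivity
  have hDYnn : ∀ j, 0 ≤ DY j := fun j =>
    intervalIntegral.integral_nonneg hT.le fun s _ => by positivity
  have hE2 : (0:ℝ) ≤ ∑' i, x (i+1)^2 := tsum_nonneg fun i => sq_nonneg _
  have hsumX : ∀ (Z : ℕ → ℝ → ℝ), IsViscousSolution β ν (Set.Icc 0 T) Z →
      (∀ n, 1 ≤ n → Z n 0 = x n) → ∀ N',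
      ∑ j ∈ Finset.range N', (∫ s in (0:ℝ)..T, lam (j+1)^2 * Z (j+1) s^2)
        ≤ (∑' i, x (i+1)^2)/(2*ν) := by
    intro Z hZ hZ0 N'
    have hE := sol_energy hβ0 hT hZ hZ0 hxpos N' T hTI
    have hint : ∀ i ∈ Finset.range N',
        IntervalIntegrable (fun s => lam (i+1)^2 * Z (i+1) s ^2) volume 0 T := fun i _ =>
      contOn_integrable (continuousOn_const.mul ((sol_contOn hZ (Nat.le_add_left 1 i)).pow 2)) hTI
    have heq : ∑ j ∈ Finset.range N', (∫ s in (0:ℝ)..T, lam (j+1)^2 * Z (j+1) s^2)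
        = ∫ s in (0:ℝ)..T, ∑ i ∈ Finset.range N', lam (i+1)^2 * Z (i+1) s^2 :=
      (intervalIntegral.integral_finset_sum hint).symm
    have h1 : 0 ≤ ∑ i ∈ Finset.range N', Z (i+1) T ^2 :=
      Finset.sum_nonneg fun i _ => sq_nonneg _
    have h3 : ∑ i ∈ Finset.range N', x (i+1)^2 ≤ ∑' i, x (i+1)^2 :=
      Summable.sum_le_tsum _ (fun i _ => sq_nonneg _) hxH
    rw [heq, le_div_iff₀ (by positivity)]
    nlinarith [hE, h1, h3]
  have hsumD : ∀ N', ∑ j ∈ Finset.range N', D j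
      ≤ (∑' i, x (i+1)^2)/(2*ν) + (∑' i, x (i+1)^2)/(2*ν) := by
    intro N'
    have h1 := hsumX X hX hX0 N'
    have h2 := hsumX Y hY hY0 N'
    simp only [hDdef, Finset.sum_add_distrib]
    exact add_le_add h1 h2
  have hDsummable : Summable D :=
    summable_of_sum_range_le (fun j => add_nonneg (hDXnn j) (hDYnn j)) hsumD
  have hDlim : Tendsto D atTop (𝓝 0) := hDsummable.tendsto_atTop_zero
  have hlim : Tendsto (fun j => 4 * Real.sqrt (∑' i, x (i+1)^2) * D j) atTop (𝓝 0) := by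
    have h := hDlim.const_mul (4 * Real.sqrt (∑' i, x (i+1)^2))
    simpa using h
  have hkey : ∀ᶠ j in atTop,
      (1/2:ℝ)^n * (X n t - Y n t)^2 ≤ 4 * Real.sqrt (∑' i, x (i+1)^2) * D j := by
    filter_upwards [eventually_ge_atTop n] with j hj
    exact key_bound hβ0 hβ3 hν hT hxpos hxH hX hX0 hY hY0 hn ht j (by omega)
  have hle0 : (1/2:ℝ)^n * (X n t - Y n t)^2 ≤ 0 := ge_of_tendsto hlim hkey
  have hw : 0 < (1/2:ℝ)^n := by positivity
  have hsq0 : (X n t - Y n t)^2 = 0 :=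
    le_antisymm (by nlinarith) (sq_nonneg _)
  have hz : X n t - Y n t = 0 := by
    exact pow_eq_zero_iff (two_ne_zero) |>.mp hsq0
  linarith
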